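/- Deterministic bound on the first k TD iterates: with u_0 = 0, ‖ū‖ ≤ 2/(1-γ), updates u_{i+1} = u_i - η x_i(⟨x_i - γx_{i+1}, u_i⟩ - r_i) with ‖x_i‖, ‖x_{i+1}‖ ≤ 1, r_i ∈ [0,1], and step size η satisfying η(1+γ) ≤ 1/(200k), every iterate i ≤ k satisfies ‖u_i - ū‖ ≤ (1 + 1/(200k))^i · 2/(1-γ) + η ∑_{l<i} (1 + 1/(200k))^l · 4/(1-γ), and hence ‖u_i - ū‖ ≤ (4 + 8kη)/(1-γ). -/

import Mathlib

set_option maxHeartbeats 1000000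


open scoped InnerProductSpace

/-- Deterministic bound on the first `k` TD iterates: with `u_0 = 0`,
`‖ū‖ ≤ 2/(1-γ)`, TD updates with features of norm at most `1`, rewards in `[0,1]`,
and step size `η(1+γ) ≤ 1/(200k)`, every `i ≤ k` satisfies
`‖u_i - ū‖ ≤ (1 + 1/(200k))^i · 2/(1-γ) + η ∑_{l<i} (1 + 1/(200k))^l · 4/(1-γ)`,
and hence `‖u_i - ū‖ ≤ (4 + 8kη)/(1-γ)`. -/
theorem stmt17 {n : ℕ} (γ η : ℝ) (hγ0 : 0 < γ) (hγ1 : γ < 1) (hη : 0 < η)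
    (k : ℕ) (hk : 1 ≤ k) (hηk : η * (1 + γ) ≤ 1 / (200 * k))
    (u x : ℕ → EuclideanSpace ℝ (Fin n)) (r : ℕ → ℝ)
    (hx : ∀ i, ‖x i‖ ≤ 1) (hr : ∀ i, 0 ≤ r i ∧ r i ≤ 1)
    (hu0 : u 0 = 0)
    (ub : EuclideanSpace ℝ (Fin n)) (hub : ‖ub‖ ≤ 2 / (1 - γ))
    (hupd : ∀ i, u (i + 1)
      = u i - η • ((⟪x i - γ • x (i + 1), u i⟫_ℝ - r i) • x i)) :
    ∀ i ≤ k,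
      ‖u i - ub‖ ≤ (1 + 1 / (200 * k)) ^ i * (2 / (1 - γ))
          + η * ∑ l ∈ Finset.range i, (1 + 1 / (200 * k)) ^ l * (4 / (1 - γ)) ∧
      ‖u i - ub‖ ≤ (4 + 8 * k * η) / (1 - γ) := by
  have hk0 : (0:ℝ) < (k:ℝ) := by exact_mod_cast Nat.pos_of_ne_zero (by omega)
  set ε : ℝ := 1 / (200 * (k:ℝ)) with hεdef
  have hε0 : 0 < ε := by positivity
  have h1γ : (0:ℝ) < 1 - γ := by linarith
  have hC : (0:ℝ) ≤ 2 / (1 - γ) := by positivity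
  have hD : (0:ℝ) ≤ 4 / (1 - γ) := by positivity
  -- coefficient inequality
  have hcoef : (1 + γ) * (2 / (1 - γ)) + 1 ≤ 4 / (1 - γ) := by
    have e2 : (2:ℝ)/(1-γ) * (1-γ) = 2 := div_mul_cancel₀ _ (ne_of_gt h1γ)
    rw [le_div_iff₀ h1γ]
    nlinarith [e2]
  -- main recursive bound, valid for all j
  have main : ∀ j, ‖u j - ub‖ ≤ (1 + ε) ^ j * (2 / (1 - γ))
      + η * ∑ l ∈ Finset.range j, (1 + ε) ^ l * (4 / (1 - γ)) := by
    intro j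
    induction j with
    | zero => simpa [hu0] using hub
    | succ j ih =>
      set N := ‖u j - ub‖ with hN
      have hN0 : 0 ≤ N := norm_nonneg _
      have hstep : ‖u (j+1) - ub‖ ≤ (1 + ε) * N + η * (4 / (1 - γ)) := by
        have hnormx : ‖x j - γ • x (j+1)‖ ≤ 1 + γ := by
          calc ‖x j - γ • x (j+1)‖ ≤ ‖x j‖ + ‖γ • x (j+1)‖ := norm_sub_le _ _
            _ ≤ 1 + γ := by
              rw [norm_smul, Real.norm_eq_abs, abs_of_pos hγ0]
              nlinarith [hx j, hx (j+1)]
        have hinner : |⟪x j - γ • x (j+1), u j⟫_ℝ| ≤ (1 + γ) * ‖u j‖ :=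
          (abs_real_inner_le_norm _ _).trans
            (mul_le_mul_of_nonneg_right hnormx (norm_nonneg _))
        have hc : |⟪x j - γ • x (j+1), u j⟫_ℝ - r j| ≤ (1 + γ) * ‖u j‖ + 1 := by
          have h2 : |r j| ≤ 1 := abs_le.mpr ⟨by linarith [(hr j).1], (hr j).2⟩
          calc |⟪x j - γ • x (j+1), u j⟫_ℝ - r j|
              ≤ |⟪x j - γ • x (j+1), u j⟫_ℝ| + |r j| := abs_sub _ _
            _ ≤ (1 + γ) * ‖u j‖ + 1 := add_le_add hinner h2
        have huj : ‖u j‖ ≤ N + 2 / (1 - γ) := by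
          calc ‖u j‖ = ‖(u j - ub) + ub‖ := by congr 1; abel
            _ ≤ ‖u j - ub‖ + ‖ub‖ := norm_add_le _ _
            _ ≤ N + 2 / (1 - γ) := by exact add_le_add le_rfl hub
        have h3 : ‖u (j+1) - ub‖ ≤ N + η * ((1 + γ) * ‖u j‖ + 1) := by
          rw [hupd j]
          calc ‖(u j - η • ((⟪x j - γ • x (j+1), u j⟫_ℝ - r j) • x j)) - ub‖
              = ‖(u j - ub) - η • ((⟪x j - γ • x (j+1), u j⟫_ℝ - r j) • x j)‖ := by
                congr 1; abel
            _ ≤ ‖u j - ub‖ + ‖η • ((⟪x j - γ • x (j+1), u j⟫_ℝ - r j) • x j)‖ :=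
                norm_sub_le _ _
            _ ≤ N + η * ((1 + γ) * ‖u j‖ + 1) := by
                rw [norm_smul, norm_smul, Real.norm_eq_abs, Real.norm_eq_abs,
                  abs_of_pos hη]
                have : |⟪x j - γ • x (j+1), u j⟫_ℝ - r j| * ‖x j‖
                    ≤ (1 + γ) * ‖u j‖ + 1 := by
                  calc |⟪x j - γ • x (j+1), u j⟫_ℝ - r j| * ‖x j‖
                      ≤ ((1 + γ) * ‖u j‖ + 1) * 1 :=
                        mul_le_mul hc (hx j) (norm_nonneg _) (by positivity)
                    _ = (1 + γ) * ‖u j‖ + 1 := mul_one _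
                nlinarith [this]
        have h4 : η * (1 + γ) * N ≤ ε * N :=
          mul_le_mul_of_nonneg_right hηk hN0
        have h5 : η * ((1 + γ) * (2 / (1 - γ)) + 1) ≤ η * (4 / (1 - γ)) :=
          mul_le_mul_of_nonneg_left hcoef (le_of_lt hη)
        have h6 : (1 + γ) * ‖u j‖ ≤ (1 + γ) * (N + 2 / (1 - γ)) :=
          mul_le_mul_of_nonneg_left huj (by linarith)
        nlinarith [h3, h4, h5, h6]
      have hsum : ∑ l ∈ Finset.range (j+1), (1 + ε) ^ l * (4 / (1 - γ))
          = (1 + ε) * ∑ l ∈ Finset.range j, (1 + ε) ^ l * (4 / (1 - γ))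
            + 4 / (1 - γ) := by
        rw [← Finset.sum_mul, ← Finset.sum_mul, geom_sum_succ]
        ring
      have hmono : (1 + ε) * N ≤ (1 + ε) * ((1 + ε) ^ j * (2 / (1 - γ))
          + η * ∑ l ∈ Finset.range j, (1 + ε) ^ l * (4 / (1 - γ))) :=
        mul_le_mul_of_nonneg_left ih (by linarith)
      calc ‖u (j+1) - ub‖ ≤ (1 + ε) * N + η * (4 / (1 - γ)) := hstep
        _ ≤ (1 + ε) * ((1 + ε) ^ j * (2 / (1 - γ))
              + η * ∑ l ∈ Finset.range j, (1 + ε) ^ l * (4 / (1 - γ)))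
              + η * (4 / (1 - γ)) := by linarith
        _ = (1 + ε) ^ (j+1) * (2 / (1 - γ))
              + η * ∑ l ∈ Finset.range (j+1), (1 + ε) ^ l * (4 / (1 - γ)) := by
            rw [hsum]; ring
  -- bound (1+ε)^i ≤ 2 for i ≤ k
  have hpow2 : ∀ i ≤ k, (1 + ε) ^ i ≤ 2 := by
    intro i hik
    have h1 : (1 + ε) ^ i ≤ (1 + ε) ^ k :=
      pow_le_pow_right₀ (by linarith) hik
    have h2 : (1 + ε) ^ k ≤ Real.exp ε ^ k :=
      pow_le_pow_left₀ (by linarith) (by linarith [Real.add_one_le_exp ε]) k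
    have h3 : Real.exp ε ^ k = Real.exp ((k:ℝ) * ε) := by
      rw [← Real.exp_nat_mul]
    have hεk : (k:ℝ) * ε = 1 / 200 := by
      rw [hεdef, mul_one_div, div_eq_div_iff (by positivity) (by norm_num)]
      ring
    have h4 : Real.exp ((1:ℝ)/200) ≤ 2 := by
      rw [show (2:ℝ) = Real.exp (Real.log 2) from (Real.exp_log (by norm_num)).symm]
      apply Real.exp_le_exp.mpr
      linarith [Real.log_two_gt_d9]
    calc (1 + ε) ^ i ≤ Real.exp ε ^ k := h1.trans h2
      _ = Real.exp ((1:ℝ)/200) := by rw [h3, hεk]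
      _ ≤ 2 := h4
  intro i hik
  refine ⟨main i, ?_⟩
  have hsumle : ∑ l ∈ Finset.range i, (1 + ε) ^ l * (4 / (1 - γ))
      ≤ (k:ℝ) * (2 * (4 / (1 - γ))) := by
    calc ∑ l ∈ Finset.range i, (1 + ε) ^ l * (4 / (1 - γ))
        ≤ ∑ l ∈ Finset.range i, 2 * (4 / (1 - γ)) := by
          apply Finset.sum_le_sum
          intro l hl
          have : l ≤ k := le_trans (Nat.le_of_lt (Finset.mem_range.mp hl)) hik
          exact mul_le_mul_of_nonneg_right (hpow2 l this) hD
      _ = (i:ℝ) * (2 * (4 / (1 - γ))) := by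
          rw [Finset.sum_const, Finset.card_range]; ring
      _ ≤ (k:ℝ) * (2 * (4 / (1 - γ))) := by
          apply mul_le_mul_of_nonneg_right _ (by positivity)
          exact_mod_cast hik
  have hpi : (1 + ε) ^ i * (2 / (1 - γ)) ≤ 2 * (2 / (1 - γ)) :=
    mul_le_mul_of_nonneg_right (hpow2 i hik) hC
  have := main i
  have hfin : (4 + 8 * (k:ℝ) * η) / (1 - γ)
      = 2 * (2 / (1 - γ)) + η * ((k:ℝ) * (2 * (4 / (1 - γ)))) := by
    field_simp; ring
  rw [hfin]
  have h7 : η * ∑ l ∈ Finset.range i, (1 + ε) ^ l * (4 / (1 - γ))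
      ≤ η * ((k:ℝ) * (2 * (4 / (1 - γ)))) :=
    mul_le_mul_of_nonneg_left hsumle (le_of_lt hη)
  linarith
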